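/- (Local error of the abc-PSI after truncation.) Under the hypotheses of the local robust error bound of the abc-PSI — namely ∇ℓ Lipschitz with constant c_l > 0 and bounded by B > 0, Y0 = U0S0V0ᵀ with U0, V0 having orthonormal columns, residual bound ‖∇ℓ(Y0) − P(Y0)∇ℓ(Y0)‖ ≤ ε, W the solution of W' = −∇ℓ(W) with W(t0) = Y0, and Ŷ1 the one-step abc-PSI output at t1 = t0 + h — if additionally the truncated output Y1 satisfies ‖Ŷ1 − Y1‖ ≤ ϑ, then ‖Y1 − W(t1)‖ ≤ h ε + 3 c_l B h² + ϑ. -/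

import Mathlib

set_option maxHeartbeats 2000000


open Matrix Set MeasureTheory Filter

attribute [local instance] Matrix.frobeniusNormedAddCommGroup Matrix.frobeniusNormedSpace

/-- The continuous linear functional `H ↦ ⟨G, H⟩ = tr(Gᵀ H)`, i.e. pairing with `G` in the
Frobenius inner product.  `hgrad : ∀ Y, HasFDerivAt ℓ (frobCLM (G Y)) Y` then states that
`G Y` is the gradient of `ℓ` at `Y` with respect to the Frobenius inner product. -/
noncomputable def frobCLM {m n : ℕ} (G : Matrix (Fin m) (Fin n) ℝ) :
    Matrix (Fin m) (Fin n) ℝ →L[ℝ] ℝ :=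
  LinearMap.toContinuousLinearMap
    { toFun := fun H => (Gᵀ * H).trace
      map_add' := by intro x y; simp [Matrix.mul_add]
      map_smul' := by intro c x; simp [Matrix.mul_smul] }


lemma frob_sq {a b : ℕ} (A : Matrix (Fin a) (Fin b) ℝ) : ‖A‖ ^ 2 = (Aᵀ * A).trace := by
  have h : (0:ℝ) ≤ ∑ i, ∑ j, ‖A i j‖ ^ (2:ℝ) := by positivity
  rw [Matrix.frobenius_norm_def, ← Real.rpow_natCast _ 2, ← Real.rpow_mul h]
  norm_num
  rw [Matrix.trace]
  simp only [Matrix.diag_apply, Matrix.mul_apply, Matrix.transpose_apply]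
  rw [Finset.sum_comm]
  congr 1; ext i; congr 1; ext j
  ring

lemma frob_mul_coiso {a b c : ℕ} {Q : Matrix (Fin b) (Fin c) ℝ} (hQ : Q * Qᵀ = 1)
    (M : Matrix (Fin a) (Fin b) ℝ) : ‖M * Q‖ = ‖M‖ := by
  have h1 : ‖M * Q‖ ^ 2 = ‖M‖ ^ 2 := by
    rw [frob_sq, frob_sq, Matrix.transpose_mul]
    rw [show Qᵀ * Mᵀ * (M * Q) = Qᵀ * (Mᵀ * M * Q) by simp [Matrix.mul_assoc]]
    rw [Matrix.trace_mul_comm, Matrix.mul_assoc, hQ, Matrix.mul_one]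
  calc ‖M * Q‖ = Real.sqrt (‖M * Q‖ ^ 2) := (Real.sqrt_sq (norm_nonneg _)).symm
    _ = Real.sqrt (‖M‖ ^ 2) := by rw [h1]
    _ = ‖M‖ := Real.sqrt_sq (norm_nonneg _)

lemma frob_mul_proj_le {a b : ℕ} {P : Matrix (Fin b) (Fin b) ℝ} (hPs : Pᵀ = P)
    (hPi : P * P = P) (M : Matrix (Fin a) (Fin b) ℝ) : ‖M * P‖ ≤ ‖M‖ := by
  have h1 : ‖M * P‖ ^ 2 + ‖M * (1 - P)‖ ^ 2 = ‖M‖ ^ 2 := by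
    have hQi : (1 - P) * (1 - P) = 1 - P := by
      simp [Matrix.mul_sub, Matrix.sub_mul, hPi]
    rw [frob_sq, frob_sq, frob_sq, Matrix.transpose_mul, Matrix.transpose_mul, hPs,
      show (1 - P)ᵀ = 1 - P by simp [Matrix.transpose_sub, hPs]]
    rw [show P * Mᵀ * (M * P) = P * (Mᵀ * M * P) by simp [Matrix.mul_assoc],
      show (1 - P) * Mᵀ * (M * (1 - P)) = (1 - P) * (Mᵀ * M * (1 - P)) by
        simp [Matrix.mul_assoc]]
    rw [Matrix.trace_mul_comm P, Matrix.trace_mul_comm (1 - P), Matrix.mul_assoc _ P P,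
      Matrix.mul_assoc _ (1 - P) (1 - P), hPi, hQi, ← Matrix.trace_add,
      ← Matrix.mul_add]
    simp
  have h2 : ‖M * P‖ ^ 2 ≤ ‖M‖ ^ 2 := by nlinarith [sq_nonneg ‖M * (1 - P)‖]
  calc ‖M * P‖ = Real.sqrt (‖M * P‖ ^ 2) := (Real.sqrt_sq (norm_nonneg _)).symm
    _ ≤ Real.sqrt (‖M‖ ^ 2) := Real.sqrt_le_sqrt h2
    _ = ‖M‖ := Real.sqrt_sq (norm_nonneg _)

lemma frob_proj_mul_le {a b : ℕ} {P : Matrix (Fin a) (Fin a) ℝ} (hPs : Pᵀ = P)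
    (hPi : P * P = P) (M : Matrix (Fin a) (Fin b) ℝ) : ‖P * M‖ ≤ ‖M‖ := by
  calc ‖P * M‖ = ‖(P * M)ᵀ‖ := (Matrix.frobenius_norm_transpose _).symm
    _ = ‖Mᵀ * P‖ := by rw [Matrix.transpose_mul, hPs]
    _ ≤ ‖Mᵀ‖ := frob_mul_proj_le hPs hPi _
    _ = ‖M‖ := Matrix.frobenius_norm_transpose _

section deriv
variable {a b c : ℕ}

noncomputable def mulLeftCLM (A : Matrix (Fin a) (Fin b) ℝ) :
    Matrix (Fin b) (Fin c) ℝ →L[ℝ] Matrix (Fin a) (Fin c) ℝ :=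
  LinearMap.toContinuousLinearMap
    { toFun := fun X => A * X
      map_add' := by intro x y; simp [Matrix.mul_add]
      map_smul' := by intro s x; simp [Matrix.mul_smul] }

noncomputable def mulRightCLM (Q : Matrix (Fin b) (Fin c) ℝ) :
    Matrix (Fin a) (Fin b) ℝ →L[ℝ] Matrix (Fin a) (Fin c) ℝ :=
  LinearMap.toContinuousLinearMap
    { toFun := fun X => X * Q
      map_add' := by intro x y; simp [Matrix.add_mul]
      map_smul' := by intro s x; simp [Matrix.smul_mul] }

noncomputable def transposeCLM : Matrix (Fin a) (Fin b) ℝ →L[ℝ] Matrix (Fin b) (Fin a) ℝ :=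
  LinearMap.toContinuousLinearMap
    { toFun := fun X => Xᵀ
      map_add' := by intro x y; simp [Matrix.transpose_add]
      map_smul' := by intro s x; simp }

lemma HasDerivAt.matMulLeft {f : ℝ → Matrix (Fin b) (Fin c) ℝ} {D : Matrix (Fin b) (Fin c) ℝ}
    {t : ℝ} (hf : HasDerivAt f D t) (A : Matrix (Fin a) (Fin b) ℝ) :
    HasDerivAt (fun s => A * f s) (A * D) t := by
  have := (mulLeftCLM (c := c) A).hasFDerivAt.comp_hasDerivAt t hf
  exact this

lemma HasDerivAt.matMulRight {f : ℝ → Matrix (Fin a) (Fin b) ℝ} {D : Matrix (Fin a) (Fin b) ℝ}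
    {t : ℝ} (hf : HasDerivAt f D t) (Q : Matrix (Fin b) (Fin c) ℝ) :
    HasDerivAt (fun s => f s * Q) (D * Q) t := by
  have := (mulRightCLM (a := a) Q).hasFDerivAt.comp_hasDerivAt t hf
  exact this

lemma HasDerivAt.matTranspose {f : ℝ → Matrix (Fin a) (Fin b) ℝ} {D : Matrix (Fin a) (Fin b) ℝ}
    {t : ℝ} (hf : HasDerivAt f D t) :
    HasDerivAt (fun s => (f s)ᵀ) Dᵀ t := by
  have := (transposeCLM (a := a) (b := b)).hasFDerivAt.comp_hasDerivAt t hf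
  exact this

end deriv

/-- Local error of the abc-PSI after truncation: under the hypotheses of the
local robust error bound of the abc-PSI, if additionally the truncated output `Y1` satisfies
`‖Ŷ1 − Y1‖ ≤ ϑ`, then `‖Y1 − W(t1)‖ ≤ h ε + 3 c_l B h² + ϑ`. -/
theorem abcpsi_local_error_bound_truncated {m n r : ℕ}
    (ℓ : Matrix (Fin m) (Fin n) ℝ → ℝ)
    (G : Matrix (Fin m) (Fin n) ℝ → Matrix (Fin m) (Fin n) ℝ)
    (hgrad : ∀ Y, HasFDerivAt ℓ (frobCLM (G Y)) Y)
    (cl B ε ϑ : ℝ) (hcl : 0 < cl) (hB : 0 < B)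
    (hlip : ∀ Z1 Z2, ‖G Z1 - G Z2‖ ≤ cl * ‖Z1 - Z2‖)
    (hbound : ∀ Z, ‖G Z‖ ≤ B)
    (t0 t1 h : ℝ) (hh : 0 < h) (ht1 : t1 = t0 + h)
    (U0 : Matrix (Fin m) (Fin r) ℝ) (hU0 : U0ᵀ * U0 = 1)
    (V0 : Matrix (Fin n) (Fin r) ℝ) (hV0 : V0ᵀ * V0 = 1)
    (S0 : Matrix (Fin r) (Fin r) ℝ)
    -- residual bound at Y0 = U0 S0 V0ᵀ
    (hres : ‖G (U0 * S0 * V0ᵀ) -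
        (U0 * U0ᵀ * G (U0 * S0 * V0ᵀ) - U0 * U0ᵀ * G (U0 * S0 * V0ᵀ) * (V0 * V0ᵀ)
          + G (U0 * S0 * V0ᵀ) * (V0 * V0ᵀ))‖ ≤ ε)
    -- full gradient flow
    (W : ℝ → Matrix (Fin m) (Fin n) ℝ)
    (hW : ∀ t ∈ Set.Icc t0 t1, HasDerivAt W (-(G (W t))) t)
    (hW0 : W t0 = U0 * S0 * V0ᵀ)
    -- K-step
    (K : ℝ → Matrix (Fin m) (Fin r) ℝ)
    (hK : ∀ t ∈ Set.Icc t0 t1, HasDerivAt K (-(G (K t * V0ᵀ) * V0)) t)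
    (hK0 : K t0 = U0 * S0)
    -- augmented basis
    (Uhat1 : Matrix (Fin m) (Fin (2 * r)) ℝ) (hUhat1 : Uhat1ᵀ * Uhat1 = 1)
    (hspanU0 : Uhat1 * Uhat1ᵀ * U0 = U0)
    (hspanK : Uhat1 * Uhat1ᵀ * K t1 = K t1)
    -- L-step
    (L : ℝ → Matrix (Fin n) (Fin (2 * r)) ℝ)
    (hL : ∀ t ∈ Set.Icc t0 t1, HasDerivAt L (-((G (Uhat1 * (L t)ᵀ))ᵀ * Uhat1)) t)
    (hL0 : L t0 = V0 * S0ᵀ * U0ᵀ * Uhat1)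
    -- truncation
    (Y1 : Matrix (Fin m) (Fin n) ℝ)
    (htrunc : ‖Uhat1 * (L t1)ᵀ - Y1‖ ≤ ϑ) :
    ‖Y1 - W t1‖ ≤ h * ε + 3 * cl * B * h ^ 2 + ϑ := by
  clear hgrad
  have ht01 : t0 ≤ t1 := by rw [ht1]; linarith
  have hGc : Continuous G := by
    refine LipschitzWith.continuous (K := Real.toNNReal cl) (LipschitzWith.of_dist_le_mul ?_)
    intro x y
    rw [dist_eq_norm, dist_eq_norm, Real.coe_toNNReal _ hcl.le]
    exact hlip x y
  set Y0 : Matrix (Fin m) (Fin n) ℝ := U0 * S0 * V0ᵀ with hY0def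
  set G0 : Matrix (Fin m) (Fin n) ℝ := G Y0 with hG0def
  set Qm : Matrix (Fin n) (Fin n) ℝ := V0 * V0ᵀ with hQdef
  set Ph : Matrix (Fin m) (Fin m) ℝ := Uhat1 * Uhat1ᵀ with hPhdef
  have hPhs : Phᵀ = Ph := by rw [hPhdef]; simp [Matrix.transpose_mul]
  have hPhi : Ph * Ph = Ph := by
    rw [hPhdef, Matrix.mul_assoc, ← Matrix.mul_assoc Uhat1ᵀ Uhat1, hUhat1, Matrix.one_mul]
  have hQs : Qmᵀ = Qm := by rw [hQdef]; simp [Matrix.transpose_mul]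
  have hQi : Qm * Qm = Qm := by
    rw [hQdef, Matrix.mul_assoc, ← Matrix.mul_assoc V0ᵀ V0, hV0, Matrix.one_mul]
  have hPhsub : ∀ (M : Matrix (Fin m) (Fin n) ℝ), ‖M - Ph * M‖ ≤ ‖M‖ := by
    intro M
    have h1 : (1 - Ph)ᵀ = 1 - Ph := by simp [Matrix.transpose_sub, hPhs]
    have h2 : (1 - Ph) * (1 - Ph) = 1 - Ph := by
      simp [Matrix.mul_sub, Matrix.sub_mul, hPhi]
    have := frob_proj_mul_le h1 h2 M
    simpa [Matrix.sub_mul, Matrix.one_mul] using this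
  -- the two auxiliary flows
  set Yh : ℝ → Matrix (Fin m) (Fin n) ℝ := fun t => Uhat1 * (L t)ᵀ with hYhdef
  set Zf : ℝ → Matrix (Fin m) (Fin n) ℝ := fun t => K t * V0ᵀ with hZdef
  have hYhd : ∀ t ∈ Icc t0 t1, HasDerivAt Yh (-(Ph * G (Yh t))) t := by
    intro t ht
    have h1 := ((hL t ht).matTranspose).matMulLeft Uhat1
    convert h1 using 1
    simp [hYhdef, hPhdef, Matrix.transpose_mul, Matrix.mul_assoc]
  have hZd : ∀ t ∈ Icc t0 t1, HasDerivAt Zf (-(G (Zf t) * Qm)) t := by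
    intro t ht
    have h1 := (hK t ht).matMulRight V0ᵀ
    convert h1 using 1
    simp [hZdef, hQdef, Matrix.mul_assoc]
  -- continuity
  have hWc : ContinuousOn W (Icc t0 t1) := fun t ht => ((hW t ht).continuousAt).continuousWithinAt
  have hYhc : ContinuousOn Yh (Icc t0 t1) :=
    fun t ht => ((hYhd t ht).continuousAt).continuousWithinAt
  have hZc : ContinuousOn Zf (Icc t0 t1) :=
    fun t ht => ((hZd t ht).continuousAt).continuousWithinAt
  -- derivative norm bounds
  have hn1 : ∀ X, ‖Ph * G X‖ ≤ B := fun X => le_trans (frob_proj_mul_le hPhs hPhi _) (hbound X)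
  have hn2 : ∀ X, ‖G X * Qm‖ ≤ B := fun X => le_trans (frob_mul_proj_le hQs hQi _) (hbound X)
  -- initial values
  have hYh0 : Yh t0 = Y0 := by
    show Uhat1 * (L t0)ᵀ = Y0
    rw [hL0]
    calc Uhat1 * (V0 * S0ᵀ * U0ᵀ * Uhat1)ᵀ = (Uhat1 * Uhat1ᵀ * U0) * S0 * V0ᵀ := by
          simp [Matrix.transpose_mul, Matrix.mul_assoc]
      _ = Y0 := by rw [hspanU0]
  have hZ0 : Zf t0 = Y0 := by
    show K t0 * V0ᵀ = Y0
    rw [hK0]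
  -- distances from Y0 along the flows
  have hsub : ∀ s ∈ Icc t0 t1, s - t0 ≤ h := by
    intro s hs
    have := hs.2
    rw [ht1] at this
    linarith
  have hWbd : ∀ s ∈ Icc t0 t1, ‖W s - Y0‖ ≤ B * (s - t0) := by
    have := norm_image_sub_le_of_norm_deriv_le_segment'
      (f' := fun t => -(G (W t))) (C := B)
      (fun x hx => (hW x hx).hasDerivWithinAt)
      (fun x hx => by simpa using hbound (W x))
    simpa [hW0] using this
  have hYhbd : ∀ s ∈ Icc t0 t1, ‖Yh s - Y0‖ ≤ B * (s - t0) := by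
    have := norm_image_sub_le_of_norm_deriv_le_segment'
      (f' := fun t => -(Ph * G (Yh t))) (C := B)
      (fun x hx => (hYhd x hx).hasDerivWithinAt)
      (fun x hx => by simpa using hn1 (Yh x))
    simpa [hYh0] using this
  have hZbd : ∀ s ∈ Icc t0 t1, ‖Zf s - Y0‖ ≤ B * (s - t0) := by
    have := norm_image_sub_le_of_norm_deriv_le_segment'
      (f' := fun t => -(G (Zf t) * Qm)) (C := B)
      (fun x hx => (hZd x hx).hasDerivWithinAt)
      (fun x hx => by simpa using hn2 (Zf x))
    simpa [hZ0] using this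
  have hGW : ∀ s ∈ Icc t0 t1, ‖G (W s) - G0‖ ≤ cl * (B * h) := by
    intro s hs
    calc ‖G (W s) - G0‖ ≤ cl * ‖W s - Y0‖ := hlip _ _
      _ ≤ cl * (B * (s - t0)) := by
          exact mul_le_mul_of_nonneg_left (hWbd s hs) hcl.le
      _ ≤ cl * (B * h) := mul_le_mul_of_nonneg_left
          (mul_le_mul_of_nonneg_left (by linarith [hsub s hs, hs.1]) hB.le) hcl.le
  have hGYh : ∀ s ∈ Icc t0 t1, ‖G (Yh s) - G0‖ ≤ cl * (B * h) := by
    intro s hs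
    calc ‖G (Yh s) - G0‖ ≤ cl * ‖Yh s - Y0‖ := hlip _ _
      _ ≤ cl * (B * (s - t0)) := mul_le_mul_of_nonneg_left (hYhbd s hs) hcl.le
      _ ≤ cl * (B * h) := mul_le_mul_of_nonneg_left
          (mul_le_mul_of_nonneg_left (by linarith [hsub s hs, hs.1]) hB.le) hcl.le
  have hGZ : ∀ s ∈ Icc t0 t1, ‖G (Zf s) - G0‖ ≤ cl * (B * h) := by
    intro s hs
    calc ‖G (Zf s) - G0‖ ≤ cl * ‖Zf s - Y0‖ := hlip _ _
      _ ≤ cl * (B * (s - t0)) := mul_le_mul_of_nonneg_left (hZbd s hs) hcl.le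
      _ ≤ cl * (B * h) := mul_le_mul_of_nonneg_left
          (mul_le_mul_of_nonneg_left (by linarith [hsub s hs, hs.1]) hB.le) hcl.le
  -- the K-step cancellation: bound on E0
  set E0 : Matrix (Fin m) (Fin n) ℝ := G0 * Qm - Ph * (G0 * Qm) with hE0def
  set k' : ℝ → Matrix (Fin m) (Fin n) ℝ :=
    fun s => -(G (Zf s) * Qm) - Ph * -(G (Zf s) * Qm) with hk'def
  have hk'c : ContinuousOn k' (Icc t0 t1) := by
    have hc : ContinuousOn (fun s => G (Zf s)) (Icc t0 t1) := hGc.comp_continuousOn hZc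
    have h1 : ContinuousOn (fun s => G (Zf s) * Qm) (Icc t0 t1) :=
      (mulRightCLM Qm).continuous.comp_continuousOn hc
    exact (h1.neg).sub ((mulLeftCLM Ph).continuous.comp_continuousOn h1.neg)
  have hk'int : @IntervalIntegrable _ PseudoMetricSpace.toUniformSpace.toTopologicalSpace _ k' volume t0 t1 := by
    apply ContinuousOn.intervalIntegrable
    rwa [Set.uIcc_of_le ht01]
  have hintk : (∫ s in t0..t1, k' s) = 0 := by
    have hkd : ∀ t ∈ Set.uIcc t0 t1,
        HasDerivAt (fun s => Zf s - Ph * Zf s) (k' t) t := by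
      intro t ht
      rw [Set.uIcc_of_le ht01] at ht
      exact (hZd t ht).sub ((hZd t ht).matMulLeft Ph)
    rw [intervalIntegral.integral_eq_sub_of_hasDerivAt hkd hk'int]
    have hk1 : Zf t1 - Ph * Zf t1 = 0 := by
      show K t1 * V0ᵀ - Ph * (K t1 * V0ᵀ) = 0
      rw [← Matrix.mul_assoc, hspanK, sub_self]
    have hk0 : Zf t0 - Ph * Zf t0 = 0 := by
      rw [hZ0, hY0def, ← Matrix.mul_assoc, ← Matrix.mul_assoc, hspanU0]
      exact sub_self _
    rw [hk1, hk0, sub_zero]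
  have hE0bd : ‖E0‖ ≤ cl * (B * h) := by
    have heq : h • E0 = ∫ s in t0..t1, (E0 + k' s) := by
      rw [intervalIntegral.integral_add intervalIntegrable_const hk'int, hintk, add_zero,
        intervalIntegral.integral_const]
      congr 1
      rw [ht1]; ring
    have hb : ‖∫ s in t0..t1, (E0 + k' s)‖ ≤ (cl * (B * h)) * |t1 - t0| := by
      apply intervalIntegral.norm_integral_le_of_norm_le_const
      intro x hx
      rw [Set.uIoc_of_le ht01] at hx
      have hx' : x ∈ Icc t0 t1 := ⟨hx.1.le, hx.2⟩
      have heq2 : E0 + k' x = (G0 - G (Zf x)) * Qm - Ph * ((G0 - G (Zf x)) * Qm) := by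
        rw [hE0def, hk'def]
        simp only [Matrix.sub_mul, Matrix.mul_sub, Matrix.mul_neg]
        abel
      rw [heq2]
      calc ‖(G0 - G (Zf x)) * Qm - Ph * ((G0 - G (Zf x)) * Qm)‖
          ≤ ‖(G0 - G (Zf x)) * Qm‖ := hPhsub _
        _ ≤ ‖G0 - G (Zf x)‖ := frob_mul_proj_le hQs hQi _
        _ = ‖G (Zf x) - G0‖ := norm_sub_rev _ _
        _ ≤ cl * (B * h) := hGZ x hx'
    rw [← heq] at hb
    rw [norm_smul, Real.norm_eq_abs, abs_of_pos hh] at hb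
    have habs : |t1 - t0| = h := by rw [ht1]; simp [abs_of_pos hh]
    rw [habs] at hb
    have h2 : h * ‖E0‖ ≤ h * (cl * (B * h)) := by nlinarith [hb]
    exact le_of_mul_le_mul_left h2 hh
  -- the middle bound
  set R : Matrix (Fin m) (Fin n) ℝ :=
    G0 - (U0 * U0ᵀ * G0 - U0 * U0ᵀ * G0 * Qm + G0 * Qm) with hRdef
  have hmid : ‖G0 - Ph * G0‖ ≤ ε + cl * (B * h) := by
    have hA : Ph * (U0 * U0ᵀ * G0) = U0 * U0ᵀ * G0 := by
      rw [← Matrix.mul_assoc, ← Matrix.mul_assoc, hspanU0]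
    have hAQ : Ph * (U0 * U0ᵀ * G0 * Qm) = U0 * U0ᵀ * G0 * Qm := by
      rw [← Matrix.mul_assoc, hA]
    have key : G0 - Ph * G0 = (R - Ph * R) + E0 := by
      rw [hRdef, hE0def, Matrix.mul_sub, Matrix.mul_add, Matrix.mul_sub, hA, hAQ]
      abel
    rw [key]
    calc ‖(R - Ph * R) + E0‖ ≤ ‖R - Ph * R‖ + ‖E0‖ := norm_add_le _ _
      _ ≤ ε + cl * (B * h) := add_le_add (le_trans (hPhsub R) hres) hE0bd
  -- the main estimate
  set g' : ℝ → Matrix (Fin m) (Fin n) ℝ :=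
    fun s => -(Ph * G (Yh s)) - -(G (W s)) with hg'def
  have hg'c : ContinuousOn g' (Icc t0 t1) := by
    have hc1 : ContinuousOn (fun s => G (Yh s)) (Icc t0 t1) := hGc.comp_continuousOn hYhc
    have hc2 : ContinuousOn (fun s => G (W s)) (Icc t0 t1) := hGc.comp_continuousOn hWc
    exact (((mulLeftCLM Ph).continuous.comp_continuousOn hc1).neg).sub hc2.neg
  have hg'int : @IntervalIntegrable _ PseudoMetricSpace.toUniformSpace.toTopologicalSpace _ g' volume t0 t1 := by
    apply ContinuousOn.intervalIntegrable
    rwa [Set.uIcc_of_le ht01]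
  have hgint : (∫ s in t0..t1, g' s) = Yh t1 - W t1 := by
    have hgd : ∀ t ∈ Set.uIcc t0 t1, HasDerivAt (fun s => Yh s - W s) (g' t) t := by
      intro t ht
      rw [Set.uIcc_of_le ht01] at ht
      exact (hYhd t ht).sub (hW t ht)
    rw [intervalIntegral.integral_eq_sub_of_hasDerivAt hgd hg'int]
    show (Yh t1 - W t1) - (Yh t0 - W t0) = Yh t1 - W t1
    rw [hYh0, hW0, sub_self, sub_zero]
  have hmain : ‖Yh t1 - W t1‖ ≤ (ε + 3 * (cl * (B * h))) * h := by
    rw [← hgint]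
    have habs : |t1 - t0| = h := by rw [ht1]; simp [abs_of_pos hh]
    rw [show (ε + 3 * (cl * (B * h))) * h = (ε + 3 * (cl * (B * h))) * |t1 - t0| by rw [habs]]
    apply intervalIntegral.norm_integral_le_of_norm_le_const
    intro x hx
    rw [Set.uIoc_of_le ht01] at hx
    have hx' : x ∈ Icc t0 t1 := ⟨hx.1.le, hx.2⟩
    have heq3 : g' x = (G (W x) - G0) + (G0 - Ph * G0) + (Ph * (G0 - G (Yh x))) := by
      rw [hg'def]
      simp only [Matrix.mul_sub]
      abel
    rw [heq3]
    calc ‖(G (W x) - G0) + (G0 - Ph * G0) + (Ph * (G0 - G (Yh x)))‖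
        ≤ ‖(G (W x) - G0) + (G0 - Ph * G0)‖ + ‖Ph * (G0 - G (Yh x))‖ := norm_add_le _ _
      _ ≤ ‖G (W x) - G0‖ + ‖G0 - Ph * G0‖ + ‖Ph * (G0 - G (Yh x))‖ := by
          have := norm_add_le (G (W x) - G0) (G0 - Ph * G0)
          linarith
      _ ≤ cl * (B * h) + (ε + cl * (B * h)) + cl * (B * h) := by
          have h3 : ‖Ph * (G0 - G (Yh x))‖ ≤ cl * (B * h) := by
            calc ‖Ph * (G0 - G (Yh x))‖ ≤ ‖G0 - G (Yh x)‖ := frob_proj_mul_le hPhs hPhi _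
              _ = ‖G (Yh x) - G0‖ := norm_sub_rev _ _
              _ ≤ cl * (B * h) := hGYh x hx'
          have h1 := hGW x hx'
          linarith [hmid]
      _ = ε + 3 * (cl * (B * h)) := by ring
  -- conclusion
  have htr : ‖Y1 - Yh t1‖ ≤ ϑ := by
    rw [norm_sub_rev]
    exact htrunc
  calc ‖Y1 - W t1‖ = ‖(Y1 - Yh t1) + (Yh t1 - W t1)‖ := by congr 1; abel
    _ ≤ ‖Y1 - Yh t1‖ + ‖Yh t1 - W t1‖ := norm_add_le _ _
    _ ≤ ϑ + (ε + 3 * (cl * (B * h))) * h := add_le_add htr hmain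
    _ = h * ε + 3 * cl * B * h ^ 2 + ϑ := by ring
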